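/- arXiv:1902.08259 — 2 statements merged into one kernel-verified Lean document; each statement's English description precedes it below -/
import Mathlib

section
/- For every integer k ≥ 2 with k ≡ 2 (mod 3), there exists a constant c > 0 (depending only on k) such that for every sufficiently large n there exist a set P of n points in ℝ² and positive distances δ₁, …, δ_k for which P spans at least c · n^{(k+1)/3 + 1} k-chains. That is, C_k(n) = Ω(n^{(k+1)/3+1}). -/
/-- The number of `k`-chains spanned by a finite point set `P` in `ℝ^d` with respect to a
sequence of distances `δ : Fin k → ℝ`: tuples `(p 0, …, p k)` of pairwise distinct points of
`P` with `dist (p j) (p (j+1)) = δ j` for all `j`. -/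
noncomputable def chainCount (d k : ℕ) (P : Finset (EuclideanSpace ℝ (Fin d)))
    (δ : Fin k → ℝ) : ℕ :=
  Set.ncard {p : Fin (k + 1) → EuclideanSpace ℝ (Fin d) |
    (∀ i, p i ∈ P) ∧ Function.Injective p ∧
    ∀ j : Fin k, dist (p j.castSucc) (p j.succ) = δ j}

/-- `maxChains d k n` is the maximum number of `k`-chains spanned by a set of `n` points in
`ℝ^d`, over all sequences of positive distances. -/
noncomputable def maxChains (d k n : ℕ) : ℕ :=
  sSup {m | ∃ (P : Finset (EuclideanSpace ℝ (Fin d))) (δ : Fin k → ℝ),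
    P.card = n ∧ (∀ j, 0 < δ j) ∧ m = chainCount d k P δ}

noncomputable def pt (a b : ℝ) : EuclideanSpace ℝ (Fin 2) :=
  (WithLp.equiv 2 (Fin 2 → ℝ)).symm ![a, b]

lemma pt_apply0 (a b : ℝ) : pt a b 0 = a := rfl
lemma pt_apply1 (a b : ℝ) : pt a b 1 = b := rfl

lemma dist_pt (a b c d : ℝ) :
    dist (pt a b) (pt c d) = Real.sqrt ((a - c)^2 + (b - d)^2) := by
  rw [EuclideanSpace.dist_eq]
  simp [Fin.sum_univ_two, pt, Real.dist_eq, sq_abs]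

lemma pt_inj {a b c d : ℝ} (h : pt a b = pt c d) : a = c ∧ b = d := by
  have h' := (WithLp.equiv 2 (Fin 2 → ℝ)).symm.injective h
  exact ⟨congrFun h' 0, congrFun h' 1⟩

noncomputable def uxr (s : ℕ) : ℝ := (1 - (s:ℝ)^2)/(1 + (s:ℝ)^2)
noncomputable def uyr (s : ℕ) : ℝ := 2*(s:ℝ)/(1 + (s:ℝ)^2)

lemma upos (s : ℕ) : (0:ℝ) < 1 + (s:ℝ)^2 := by positivity

lemma usq (s : ℕ) : uxr s ^ 2 + uyr s ^ 2 = 1 := by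
  have := (upos s).ne'
  simp only [uxr, uyr]
  field_simp [uxr, uyr]
  ring

lemma uxr_le (s : ℕ) : uxr s ≤ 1 := by
  rw [uxr, div_le_one (upos s)]
  nlinarith [sq_nonneg (s:ℝ)]

lemma uxr_gt (s : ℕ) : -1 < uxr s := by
  rw [uxr, lt_div_iff₀ (upos s)]
  nlinarith [sq_nonneg (s:ℝ)]

lemma uxr_inj {s s' : ℕ} (h : uxr s = uxr s') : s = s' := by
  rw [uxr, uxr, div_eq_div_iff (upos s).ne' (upos s').ne'] at h
  have : (s:ℝ)^2 = (s':ℝ)^2 := by nlinarith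
  have : (s:ℝ) = s' := by
    nlinarith [Nat.cast_nonneg (α := ℝ) s, Nat.cast_nonneg (α := ℝ) s']
  exact_mod_cast this

lemma uyr_pos {s : ℕ} (hs : 1 ≤ s) : 0 < uyr s := by
  have : (0:ℝ) < s := by exact_mod_cast hs
  exact div_pos (by linarith) (upos s)

noncomputable def hp (i : ℕ) : EuclideanSpace ℝ (Fin 2) := pt (3*i) 0
noncomputable def cp (i s : ℕ) : EuclideanSpace ℝ (Fin 2) := pt (3*i + uxr s) (uyr s)

lemma dist_cp_hp (i s : ℕ) : dist (cp i s) (hp i) = 1 := by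
  rw [cp, hp, dist_pt]
  rw [show (3*(i:ℝ) + uxr s - 3*i) = uxr s by ring, show (uyr s - 0) = uyr s by ring,
    usq s, Real.sqrt_one]

lemma dist_hp_cp (i s : ℕ) : dist (hp i) (cp i s) = 1 := by
  rw [dist_comm]; exact dist_cp_hp i s

lemma dist_cp_cp (i s : ℕ) : dist (cp i s) (cp (i+1) s) = 3 := by
  rw [cp, cp, dist_pt]
  push_cast
  rw [show (3*(i:ℝ) + uxr s - (3*(i+1) + uxr s)) = -3 by ring, show (uyr s - uyr s) = 0 by ring]
  rw [show ((-3:ℝ))^2 + 0^2 = 3^2 by norm_num, Real.sqrt_sq (by norm_num)]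

lemma cp_inj {i s i' s' : ℕ} (h : cp i s = cp i' s') : i = i' ∧ s = s' := by
  obtain ⟨hx, _⟩ := pt_inj h
  have hii : i = i' := by
    rcases lt_trichotomy i i' with hl | he | hl
    · exfalso
      have : (3*(i:ℝ) + 3) ≤ 3*(i':ℝ) := by
        have : (i:ℝ) + 1 ≤ i' := by exact_mod_cast hl
        linarith
      nlinarith [uxr_le s, uxr_gt s, uxr_le s', uxr_gt s']
    · exact he
    · exfalso
      have : (3*(i':ℝ) + 3) ≤ 3*(i:ℝ) := by
        have : (i':ℝ) + 1 ≤ i := by exact_mod_cast hl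
        linarith
      nlinarith [uxr_le s, uxr_gt s, uxr_le s', uxr_gt s']
  refine ⟨hii, uxr_inj ?_⟩
  subst hii
  linarith

lemma hp_inj {i i' : ℕ} (h : hp i = hp i') : i = i' := by
  obtain ⟨hx, _⟩ := pt_inj h
  have : (i:ℝ) = i' := by linarith
  exact_mod_cast this

lemma hp_ne_cp {i i' s : ℕ} (hs : 1 ≤ s) : hp i ≠ cp i' s := by
  intro h
  obtain ⟨_, hy⟩ := pt_inj h
  exact absurd hy.symm (uyr_pos hs).ne'

noncomputable def padp (r : ℕ) : EuclideanSpace ℝ (Fin 2) := pt (-10) r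

lemma padp_inj {r r' : ℕ} (h : padp r = padp r') : r = r' := by
  obtain ⟨_, hy⟩ := pt_inj h
  exact_mod_cast hy

lemma padp_ne_hp (r i : ℕ) : padp r ≠ hp i := by
  intro h
  obtain ⟨hx, _⟩ := pt_inj h
  have : (0:ℝ) ≤ 3*i := by positivity
  linarith

lemma padp_ne_cp (r i s : ℕ) : padp r ≠ cp i s := by
  intro h
  obtain ⟨hx, _⟩ := pt_inj h
  have : (0:ℝ) ≤ 3*i := by positivity
  have := uxr_gt s
  linarith

/-- extension of a `Fin (M+2)`-indexed family to ℕ -/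
def exts (M : ℕ) (σ : Fin (M+2) → ℕ) : ℕ → ℕ := fun a => σ ⟨a % (M+2), Nat.mod_lt _ (by omega)⟩

lemma exts_eq (M : ℕ) (σ : Fin (M+2) → ℕ) {a : ℕ} (ha : a < M + 2) :
    exts M σ a = σ ⟨a, ha⟩ := by
  simp only [exts]
  congr 1
  exact Fin.ext (Nat.mod_eq_of_lt ha)

/-- the chain associated to a selection σ of circle-point indices -/
noncomputable def chmap (M : ℕ) (σ : ℕ → ℕ) : Fin (3*M+2+1) → EuclideanSpace ℝ (Fin 2) :=
  fun j => if (j:ℕ) % 3 = 1 then hp ((j:ℕ)/3) else cp ((j:ℕ)/3) (σ (((j:ℕ)+1)/3))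

noncomputable instance : DecidableEq (EuclideanSpace ℝ (Fin 2)) := Classical.decEq _

noncomputable def Pset (M t pad : ℕ) : Finset (EuclideanSpace ℝ (Fin 2)) :=
  ((Finset.range (M+1)).image hp) ∪
  (((Finset.range (M+1)) ×ˢ (Finset.Icc 1 t)).image (fun z => cp z.1 z.2)) ∪
  ((Finset.range pad).image padp)

lemma hp_mem {M t pad i : ℕ} (hi : i ≤ M) : hp i ∈ Pset M t pad := by
  simp only [Pset, Finset.mem_union, Finset.mem_image, Finset.mem_range]
  exact Or.inl (Or.inl ⟨i, by omega, rfl⟩)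

lemma cp_mem {M t pad i s : ℕ} (hi : i ≤ M) (hs1 : 1 ≤ s) (hs2 : s ≤ t) :
    cp i s ∈ Pset M t pad := by
  simp only [Pset, Finset.mem_union, Finset.mem_image, Finset.mem_product, Finset.mem_range,
    Finset.mem_Icc, Finset.mem_product]
  exact Or.inl (Or.inr ⟨(i, s), ⟨by omega, hs1, hs2⟩, rfl⟩)

lemma chain_dist (M : ℕ) (σ : ℕ → ℕ) (j : Fin (3*M+2)) :
    dist (chmap M σ j.castSucc) (chmap M σ j.succ) = if (j:ℕ) % 3 = 2 then (3:ℝ) else 1 := by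
  have hj := j.isLt
  simp only [chmap, Fin.coe_castSucc, Fin.val_succ]
  rcases (show (j:ℕ) % 3 = 0 ∨ (j:ℕ) % 3 = 1 ∨ (j:ℕ) % 3 = 2 by omega) with h | h | h
  · rw [if_neg (by omega), if_pos (by omega), if_neg (by omega),
      show ((j:ℕ)+1)/3 = (j:ℕ)/3 from by omega]
    exact dist_cp_hp _ _
  · rw [if_pos (by omega), if_neg (by omega), if_neg (by omega),
      show ((j:ℕ)+1)/3 = (j:ℕ)/3 from by omega]
    exact dist_hp_cp _ _
  · rw [if_neg (by omega), if_neg (by omega), if_pos (by omega),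
      show ((j:ℕ)+1)/3 = (j:ℕ)/3 + 1 from by omega,
      show ((j:ℕ)+1+1)/3 = (j:ℕ)/3 + 1 from by omega]
    exact dist_cp_cp _ _

lemma chain_mem (M t pad : ℕ) (σ : ℕ → ℕ) (hσ : ∀ a, a < M+2 → 1 ≤ σ a ∧ σ a ≤ t)
    (j : Fin (3*M+2+1)) : chmap M σ j ∈ Pset M t pad := by
  have hj := j.isLt
  simp only [chmap]
  split
  · exact hp_mem (by omega)
  · have ha : ((j:ℕ)+1)/3 < M + 2 := by omega
    obtain ⟨h1, h2⟩ := hσ _ ha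
    exact cp_mem (by omega) h1 h2

lemma chain_inj (M : ℕ) (σ : ℕ → ℕ) (hσ1 : ∀ a, a < M+2 → 1 ≤ σ a)
    (hσinj : ∀ a a', a < M+2 → a' < M+2 → σ a = σ a' → a = a') :
    Function.Injective (chmap M σ) := by
  intro j1 j2 h
  have hj1 := j1.isLt
  have hj2 := j2.isLt
  have ha1 : ((j1:ℕ)+1)/3 < M + 2 := by omega
  have ha2 : ((j2:ℕ)+1)/3 < M + 2 := by omega
  simp only [chmap] at h
  by_cases h1 : (j1:ℕ) % 3 = 1 <;> by_cases h2 : (j2:ℕ) % 3 = 1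
  · rw [if_pos h1, if_pos h2] at h
    exact Fin.ext (by have := hp_inj h; omega)
  · rw [if_pos h1, if_neg h2] at h
    exact absurd h (hp_ne_cp (hσ1 _ ha2))
  · rw [if_neg h1, if_pos h2] at h
    exact absurd h.symm (hp_ne_cp (hσ1 _ ha1))
  · rw [if_neg h1, if_neg h2] at h
    obtain ⟨hi, hs⟩ := cp_inj h
    have := hσinj _ _ ha1 ha2 hs
    exact Fin.ext (by omega)

lemma hp_injective : Function.Injective hp := fun _ _ h => hp_inj h

lemma Pset_card (M t pad : ℕ) : (Pset M t pad).card = (M+1) + (M+1)*t + pad := by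
  rw [Pset]
  rw [Finset.card_union_of_disjoint, Finset.card_union_of_disjoint]
  · rw [Finset.card_image_of_injective _ hp_injective,
      Finset.card_image_of_injective _ (fun z z' h => by
        obtain ⟨h1, h2⟩ := cp_inj h; exact Prod.ext h1 h2),
      Finset.card_image_of_injective _ (fun _ _ h => padp_inj h)]
    simp [Nat.card_Icc, mul_comm]
  · rw [Finset.disjoint_left]
    rintro x hx hx'
    simp only [Finset.mem_image, Finset.mem_product, Finset.mem_range, Finset.mem_Icc] at hx hx'
    obtain ⟨i, _, rfl⟩ := hx
    obtain ⟨⟨i', s⟩, ⟨_, hs, _⟩, h⟩ := hx'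
    exact hp_ne_cp hs h.symm
  · rw [Finset.disjoint_left]
    rintro x hx hx'
    simp only [Finset.mem_union, Finset.mem_image, Finset.mem_product, Finset.mem_range,
      Finset.mem_Icc] at hx hx'
    obtain ⟨r, _, rfl⟩ := hx'
    rcases hx with ⟨i, _, h⟩ | ⟨⟨i, s⟩, _, h⟩
    · exact padp_ne_hp r i h.symm
    · exact padp_ne_cp r i s h.symm

lemma count_lb (M q pad : ℕ) :
    q ^ (M+2) ≤ chainCount 2 (3*M+2) (Pset M ((M+2)*q) pad)
      (fun j => if (j:ℕ) % 3 = 2 then (3:ℝ) else 1) := by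
  classical
  set t := (M+2)*q with ht
  set S := {p : Fin (3*M+2 + 1) → EuclideanSpace ℝ (Fin 2) |
    (∀ i, p i ∈ Pset M t pad) ∧ Function.Injective p ∧
    ∀ j : Fin (3*M+2), dist (p j.castSucc) (p j.succ) =
      (fun j : Fin (3*M+2) => if (j:ℕ) % 3 = 2 then (3:ℝ) else 1) j} with hS
  have hcc : chainCount 2 (3*M+2) (Pset M t pad)
      (fun j => if (j:ℕ) % 3 = 2 then (3:ℝ) else 1) = S.ncard := rfl
  set T : Finset (Fin (M+2) → ℕ) :=
    Fintype.piFinset (fun a => Finset.Ioc ((a:ℕ)*q) (((a:ℕ)+1)*q)) with hT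
  set Φ : (Fin (M+2) → ℕ) → (Fin (3*M+2+1) → EuclideanSpace ℝ (Fin 2)) :=
    fun σ => chmap M (exts M σ) with hΦ
  have hmemT : ∀ σ ∈ T, ∀ a : Fin (M+2), (a:ℕ)*q < σ a ∧ σ a ≤ ((a:ℕ)+1)*q := by
    intro σ hσ a
    rw [hT, Fintype.mem_piFinset] at hσ
    have := hσ a
    rwa [Finset.mem_Ioc] at this
  have hbnd : ∀ σ ∈ T, ∀ a, a < M+2 → 1 ≤ exts M σ a ∧ exts M σ a ≤ t := by
    intro σ hσ a ha
    rw [exts_eq M σ ha]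
    obtain ⟨h1, h2⟩ := hmemT σ hσ ⟨a, ha⟩
    refine ⟨by omega, le_trans h2 ?_⟩
    rw [ht]
    have : a + 1 ≤ M + 2 := by omega
    exact Nat.mul_le_mul_right q this
  have hinj : ∀ σ ∈ T, ∀ a a', a < M+2 → a' < M+2 → exts M σ a = exts M σ a' → a = a' := by
    intro σ hσ a a' ha ha' h
    rw [exts_eq M σ ha, exts_eq M σ ha'] at h
    obtain ⟨h1, h2⟩ := hmemT σ hσ ⟨a, ha⟩
    obtain ⟨h1', h2'⟩ := hmemT σ hσ ⟨a', ha'⟩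
    simp only at h1 h2 h1' h2'
    by_contra hne
    rcases Nat.lt_or_ge a a' with hl | hg
    · have : (a+1) ≤ a' := by omega
      have := Nat.mul_le_mul_right q this
      omega
    · have : (a'+1) ≤ a := by omega
      have := Nat.mul_le_mul_right q this
      omega
  have hsub : Φ '' ↑T ⊆ S := by
    rintro _ ⟨σ, hσ, rfl⟩
    refine ⟨chain_mem M t pad _ (hbnd σ hσ), chain_inj M _ (fun a ha => (hbnd σ hσ a ha).1)
      (hinj σ hσ), chain_dist M _⟩
  have hΦinj : Set.InjOn Φ ↑T := by
    intro σ hσ σ' hσ' h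
    funext a
    by_cases h0 : (a:ℕ) = 0
    · have hj : (0:ℕ) < 3*M+2+1 := by omega
      have := congrFun h ⟨0, hj⟩
      simp only [hΦ, chmap] at this
      rw [if_neg (by omega), if_neg (by omega)] at this
      obtain ⟨_, hs⟩ := cp_inj this
      rw [show ((0:ℕ)+1)/3 = 0 from by norm_num] at hs
      rw [exts_eq M σ (show 0 < M+2 by omega), exts_eq M σ' (show 0 < M+2 by omega)] at hs
      rwa [show (⟨0, by omega⟩ : Fin (M+2)) = a from Fin.ext h0.symm] at hs
    · have hav := a.isLt
      have hj : 3*(a:ℕ) - 1 < 3*M+2+1 := by omega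
      have := congrFun h ⟨3*(a:ℕ) - 1, hj⟩
      simp only [hΦ, chmap] at this
      rw [if_neg (by omega), if_neg (by omega)] at this
      obtain ⟨_, hs⟩ := cp_inj this
      rw [show (3*(a:ℕ) - 1 + 1)/3 = (a:ℕ) from by omega] at hs
      rw [exts_eq M σ hav, exts_eq M σ' hav] at hs
      rwa [show (⟨(a:ℕ), hav⟩ : Fin (M+2)) = a from Fin.ext rfl] at hs
  have hSfin : S.Finite := by
    have hfin : (Set.pi Set.univ (fun _ : Fin (3*M+2+1) => (↑(Pset M t pad) :
        Set (EuclideanSpace ℝ (Fin 2))))).Finite :=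
      Set.Finite.pi (fun _ => (Pset M t pad).finite_toSet)
    exact hfin.subset (fun p hp i _ => hp.1 i)
  have hTcard : T.card = q ^ (M+2) := by
    rw [hT, Fintype.card_piFinset]
    have : ∀ a : Fin (M+2), (Finset.Ioc ((a:ℕ)*q) (((a:ℕ)+1)*q)).card = q := by
      intro a
      rw [Nat.card_Ioc]
      have : ((a:ℕ)+1)*q = (a:ℕ)*q + q := by ring
      omega
    rw [Finset.prod_congr rfl (fun a _ => this a), Finset.prod_const, Finset.card_univ,
      Fintype.card_fin]
  rw [hcc]
  calc q ^ (M+2) = T.card := hTcard.symm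
    _ = (Φ '' ↑T).ncard := by rw [Set.ncard_image_of_injOn hΦinj, Set.ncard_coe_finset]
    _ ≤ S.ncard := Set.ncard_le_ncard hsub hSfin

theorem chains_lower_R2_mod3_eq_2 (k : ℕ) (hk : 2 ≤ k) (hmod : k % 3 = 2) :
    ∃ c : ℝ, 0 < c ∧ ∃ N : ℕ, ∀ n : ℕ, N ≤ n →
      ∃ (P : Finset (EuclideanSpace ℝ (Fin 2))) (δ : Fin k → ℝ),
        P.card = n ∧ (∀ j, 0 < δ j) ∧
        c * (n : ℝ) ^ ((k + 1) / 3 + 1) ≤ (chainCount 2 k P δ : ℝ) := by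
  obtain ⟨M, rfl⟩ : ∃ M, k = 3*M+2 := ⟨k/3, by omega⟩
  set D : ℕ := (M+1)*(M+2) with hD
  have hD1 : 1 ≤ D := Nat.mul_pos (by omega) (by omega)
  refine ⟨((4*D:ℝ))⁻¹ ^ (M+2), by positivity, 4*D, fun n hn => ?_⟩
  set q : ℕ := n / (2*D) with hq
  have hq1 : 1 ≤ q := by
    rw [hq]
    exact Nat.one_le_div_iff (by omega) |>.mpr (by omega)
  have hDq : 2*D*q ≤ n := by
    rw [hq, mul_comm]
    exact Nat.div_mul_le_self n (2*D)
  have hle : (M+1) + (M+1)*((M+2)*q) ≤ n := by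
    have h1 : (M+1)*((M+2)*q) = D*q := by rw [hD]; ring
    have h2 : 2*(M+1) ≤ 4*D := by rw [hD]; nlinarith
    have h0 : 2*D*q = 2*(D*q) := by ring
    omega
  set pad : ℕ := n - (M+1) - (M+1)*((M+2)*q) with hpad
  refine ⟨Pset M ((M+2)*q) pad, fun j => if (j:ℕ) % 3 = 2 then (3:ℝ) else 1, ?_, ?_, ?_⟩
  · rw [Pset_card]
    omega
  · intro j
    dsimp only
    split <;> norm_num
  · have he : (3*M+2 + 1) / 3 + 1 = M + 2 := by omega
    rw [he]
    have hcount := count_lb M q pad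
    have hcast : (q:ℝ) ^ (M+2) ≤ (chainCount 2 (3*M+2) (Pset M ((M+2)*q) pad)
        (fun j => if (j:ℕ) % 3 = 2 then (3:ℝ) else 1) : ℝ) := by
      exact_mod_cast hcount
    refine le_trans ?_ hcast
    rw [← mul_pow]
    refine pow_le_pow_left₀ (by positivity) ?_ _
    rw [inv_mul_eq_div, div_le_iff₀ (by positivity)]
    have hmod2 := Nat.div_add_mod n (2*D)
    have hmodlt : n % (2*D) < 2*D := Nat.mod_lt _ (by omega)
    have h1 : (n:ℝ) = 2*D*q + (n % (2*D) : ℕ) := by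
      rw [hq]
      exact_mod_cast hmod2.symm
    have h2 : ((n % (2*D) : ℕ) : ℝ) < 2*D := by exact_mod_cast hmodlt
    have h3 : (1:ℝ) ≤ q := by exact_mod_cast hq1
    have h4 : (1:ℝ) ≤ D := by exact_mod_cast hD1
    nlinarith
end

section
/- For every even integer k ≥ 2, there exists a constant c > 0 (depending only on k) such that for every sufficiently large n there exist a set P of n points in ℝ³ and positive distances δ₁, …, δ_k for which P spans at least c · n^{k/2 + 1} k-chains. That is, C⁽³⁾_k(n) = Ω(n^{k/2+1}). -/
noncomputable def cpt (n t : ℕ) : EuclideanSpace ℝ (Fin 3) :=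
  WithLp.toLp 2 ![(t:ℝ)/n, Real.sqrt (1 - ((t:ℝ)/n)^2), 0]

noncomputable def apt (i : ℕ) : EuclideanSpace ℝ (Fin 3) :=
  WithLp.toLp 2 ![0, 0, (i:ℝ)]

lemma dist_cpt_apt (n t i : ℕ) (ht : t < n) :
    dist (cpt n t) (apt i) = Real.sqrt (1 + (i:ℝ)^2) := by
  have hn : (0:ℝ) < n := by exact_mod_cast Nat.pos_of_ne_zero (by omega)
  have hx0 : (0:ℝ) ≤ (t:ℝ)/n := by positivity
  have hx1 : (t:ℝ)/n ≤ 1 := by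
    rw [div_le_one hn]; exact_mod_cast ht.le
  have hsq : ((t:ℝ)/n)^2 ≤ 1 := by nlinarith
  rw [EuclideanSpace.dist_eq]
  congr 1
  rw [Fin.sum_univ_three]
  simp [cpt, apt, Real.sq_sqrt (by linarith : (0:ℝ) ≤ 1 - ((t:ℝ)/n)^2)]

lemma cpt_inj {n t t' : ℕ} (h : cpt n t = cpt n t') (hn : 0 < n) : t = t' := by
  have h0 := congrArg (fun v : EuclideanSpace ℝ (Fin 3) => v 0) h
  simp only [cpt, PiLp.toLp_apply, Matrix.cons_val_zero] at h0
  have hn' : (0:ℝ) < n := by exact_mod_cast hn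
  have : (t:ℝ) = t' := by
    field_simp at h0; exact_mod_cast h0
  exact_mod_cast this

lemma apt_inj {i i' : ℕ} (h : apt i = apt i') : i = i' := by
  have h0 := congrArg (fun v : EuclideanSpace ℝ (Fin 3) => v 2) h
  simp [apt] at h0
  exact_mod_cast h0

lemma cpt_ne_apt (n t i : ℕ) (hi : 0 < i) : cpt n t ≠ apt i := by
  intro h
  have h0 := congrArg (fun v : EuclideanSpace ℝ (Fin 3) => v 2) h
  simp [cpt, apt] at h0
  have : (0:ℝ) < i := by exact_mod_cast hi
  rw [← h0] at this
  norm_num at this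

/-- The candidate chain: even positions are circle points indexed by `g`, odd positions
are axis points at height `j/2 + 1`. -/
noncomputable def chainPt (n m k : ℕ) (hkm : k = 2*m) (g : Fin (m+1) → Fin (n-m))
    (j : Fin (k+1)) : EuclideanSpace ℝ (Fin 3) :=
  if j.val % 2 = 0 then
    cpt n (g ⟨j.val/2, by have := j.isLt; omega⟩ : Fin (n-m))
  else apt (j.val/2 + 1)

lemma chainPt_even (n m k : ℕ) (hkm : k = 2*m) (g : Fin (m+1) → Fin (n-m))
    (j : Fin (k+1)) (hj : j.val % 2 = 0) (h2 : j.val/2 < m+1) :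
    chainPt n m k hkm g j = cpt n (g ⟨j.val/2, h2⟩ : Fin (n-m)) := by
  simp only [chainPt, if_pos hj]

lemma chainPt_odd (n m k : ℕ) (hkm : k = 2*m) (g : Fin (m+1) → Fin (n-m))
    (j : Fin (k+1)) (hj : ¬ j.val % 2 = 0) :
    chainPt n m k hkm g j = apt (j.val/2 + 1) := by
  simp only [chainPt, if_neg hj]

theorem chains_lower_R3_even (k : ℕ) (hk : 2 ≤ k) (heven : Even k) :
    ∃ c : ℝ, 0 < c ∧ ∃ N : ℕ, ∀ n : ℕ, N ≤ n →
      ∃ (P : Finset (EuclideanSpace ℝ (Fin 3))) (δ : Fin k → ℝ),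
        P.card = n ∧ (∀ j, 0 < δ j) ∧
        c * (n : ℝ) ^ (k / 2 + 1) ≤ (chainCount 3 k P δ : ℝ) := by
  classical
  obtain ⟨m, hm⟩ := heven
  have hkm : k = 2*m := by omega
  have hm1 : 1 ≤ m := by omega
  refine ⟨(1/2 : ℝ)^(m+1), by positivity, 4*m+4, fun n hn => ?_⟩
  have hnpos : 0 < n := by omega
  set nc := n - m with hnc
  have hncn : nc ≤ n := Nat.sub_le _ _
  -- the point set
  set Pc : Finset (EuclideanSpace ℝ (Fin 3)) := (Finset.range nc).image (cpt n) with hPc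
  set Pa : Finset (EuclideanSpace ℝ (Fin 3)) :=
    (Finset.range m).image (fun i => apt (i+1)) with hPa
  set δ : Fin k → ℝ := fun j => Real.sqrt (1 + ((j.val/2 + 1 : ℕ) : ℝ)^2) with hδ
  refine ⟨Pc ∪ Pa, δ, ?_, ?_, ?_⟩
  · -- cardinality
    rw [Finset.card_union_of_disjoint, Finset.card_image_of_injOn,
      Finset.card_image_of_injOn, Finset.card_range, Finset.card_range]
    · omega
    · intro a _ b _ hab
      exact Nat.succ_injective (apt_inj hab)
    · intro a _ b _ hab
      exact cpt_inj hab hnpos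
    · rw [Finset.disjoint_left]
      rintro x hx hx'
      simp only [hPc, hPa, Finset.mem_image, Finset.mem_range] at hx hx'
      obtain ⟨t, _, rfl⟩ := hx
      obtain ⟨i, _, hi⟩ := hx'
      exact cpt_ne_apt n t (i+1) (Nat.succ_pos i) hi.symm
  · -- positivity of δ
    intro j
    have : (0:ℝ) < 1 + ((j.val/2 + 1 : ℕ) : ℝ)^2 := by positivity
    exact Real.sqrt_pos.mpr this
  · -- the chain count bound
    have hnm : m + 1 ≤ nc := by omega
    have hgn : ∀ (x : Fin nc), (x : ℕ) < n := fun x => lt_of_lt_of_le x.isLt hncn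
    set S : Set (Fin (k + 1) → EuclideanSpace ℝ (Fin 3)) :=
      {p : Fin (k + 1) → EuclideanSpace ℝ (Fin 3) |
        (∀ i, p i ∈ Pc ∪ Pa) ∧ Function.Injective p ∧
        ∀ j : Fin k, dist (p j.castSucc) (p j.succ) = δ j} with hSdef
    have hmem : ∀ g : Fin (m+1) ↪ Fin nc, chainPt n m k hkm g ∈ S := by
      intro g
      refine ⟨?_, ?_, ?_⟩
      · intro i
        by_cases hi : i.val % 2 = 0
        · rw [chainPt_even n m k hkm g i hi (by have := i.isLt; omega)]
          exact Finset.mem_union_left _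
            (Finset.mem_image.mpr ⟨_, Finset.mem_range.mpr (g _).isLt, rfl⟩)
        · rw [chainPt_odd n m k hkm g i hi]
          refine Finset.mem_union_right _
            (Finset.mem_image.mpr ⟨i.val/2, Finset.mem_range.mpr ?_, rfl⟩)
          have := i.isLt; omega
      · intro a b hab
        have ha2 : a.val/2 < m+1 := by have := a.isLt; omega
        have hb2 : b.val/2 < m+1 := by have := b.isLt; omega
        by_cases ha : a.val % 2 = 0 <;> by_cases hb : b.val % 2 = 0
        · rw [chainPt_even n m k hkm g a ha ha2, chainPt_even n m k hkm g b hb hb2] at hab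
          have h1 := cpt_inj hab hnpos
          have h2 : (⟨a.val/2, ha2⟩ : Fin (m+1)) = ⟨b.val/2, hb2⟩ :=
            g.injective (Fin.ext h1)
          have h3 : a.val/2 = b.val/2 := congrArg Fin.val h2
          exact Fin.ext (by omega)
        · rw [chainPt_even n m k hkm g a ha ha2, chainPt_odd n m k hkm g b hb] at hab
          exact absurd hab (cpt_ne_apt _ _ _ (Nat.succ_pos _))
        · rw [chainPt_odd n m k hkm g a ha, chainPt_even n m k hkm g b hb hb2] at hab
          exact absurd hab.symm (cpt_ne_apt _ _ _ (Nat.succ_pos _))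
        · rw [chainPt_odd n m k hkm g a ha, chainPt_odd n m k hkm g b hb] at hab
          have h3 := apt_inj hab
          exact Fin.ext (by omega)
      · intro j
        have hcs : (j.castSucc : Fin (k+1)).val = j.val := rfl
        have hsu : (j.succ : Fin (k+1)).val = j.val + 1 := rfl
        by_cases hj : j.val % 2 = 0
        · rw [chainPt_even n m k hkm g j.castSucc (by rw [hcs]; exact hj)
            (by have := j.isLt; rw [hcs]; omega),
            chainPt_odd n m k hkm g j.succ (by rw [hsu]; omega),
            dist_cpt_apt _ _ _ (hgn _)]
          have hq : (j.succ : Fin (k+1)).val/2 + 1 = j.val/2 + 1 := by rw [hsu]; omega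
          rw [hq]
        · rw [chainPt_odd n m k hkm g j.castSucc (by rw [hcs]; exact hj),
            chainPt_even n m k hkm g j.succ (by rw [hsu]; omega)
            (by have := j.isLt; rw [hsu]; omega),
            dist_comm, dist_cpt_apt _ _ _ (hgn _)]
          have hq : (j.castSucc : Fin (k+1)).val/2 + 1 = j.val/2 + 1 := by rw [hcs]
          rw [hq]
    have hSfin : S.Finite := by
      apply Set.Finite.subset
        (Set.Finite.pi (fun _ : Fin (k+1) => (Pc ∪ Pa).finite_toSet))
      intro p hp
      rw [Set.mem_pi]
      intro i _
      exact hp.1 i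
    have hrange : Set.range (fun g : Fin (m+1) ↪ Fin nc => chainPt n m k hkm g) ⊆ S := by
      rintro _ ⟨g, rfl⟩; exact hmem g
    have hinj : Function.Injective
        (fun g : Fin (m+1) ↪ Fin nc => chainPt n m k hkm g) := by
      intro g g' h
      have h' : ∀ x, chainPt n m k hkm (g : Fin (m+1) → Fin nc) x
          = chainPt n m k hkm (g' : Fin (m+1) → Fin nc) x := congrFun h
      ext i
      have hik : 2*i.val < k+1 := by have := i.isLt; omega
      have hco := h' ⟨2*i.val, hik⟩
      simp only [chainPt] at hco
      rw [if_pos (show (⟨2*i.val, hik⟩ : Fin (k+1)).val % 2 = 0 from by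
        simp [Nat.mul_mod_right])] at hco
      simp only [show (⟨2*i.val, hik⟩ : Fin (k+1)).val / 2 = i.val from by
        simp [Nat.mul_div_cancel_left], Fin.eta] at hco
      rw [if_pos (show 2*i.val % 2 = 0 from by omega)] at hco
      exact cpt_inj hco hnpos
    have hcard : nc.descFactorial (m+1) ≤ chainCount 3 k (Pc ∪ Pa) δ := by
      rw [chainCount]
      have hle := Set.ncard_le_ncard hrange hSfin
      rwa [← Nat.card_coe_set_eq, Nat.card_range_of_injective hinj,
        Nat.card_eq_fintype_card, Fintype.card_embedding_eq,
        Fintype.card_fin, Fintype.card_fin] at hle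
    have hk2 : k/2 = m := by omega
    rw [hk2]
    have hsub : nc + 1 - (m+1) = n - 2*m := by omega
    have h1 : ((n - 2*m : ℕ) : ℝ) ^ (m+1) ≤ (nc.descFactorial (m+1) : ℝ) := by
      have := Nat.pow_sub_le_descFactorial nc (m+1)
      rw [hsub] at this
      exact_mod_cast this
    have h2 : (1/2:ℝ)^(m+1) * (n:ℝ)^(m+1) ≤ ((n - 2*m : ℕ):ℝ)^(m+1) := by
      rw [← mul_pow]
      apply pow_le_pow_left₀ (by positivity)
      rw [Nat.cast_sub (by omega)]
      push_cast
      have : (4*m + 4 : ℝ) ≤ n := by exact_mod_cast hn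
      linarith
    have h3 : ((nc.descFactorial (m+1) : ℕ) : ℝ) ≤ (chainCount 3 k (Pc ∪ Pa) δ : ℝ) := by
      exact_mod_cast hcard
    linarith
end
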